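/- arXiv:2106.09629 — 2 statements merged into one kernel-verified Lean document; each statement's English description precedes it below -/
import Mathlib

section
/- For any unital qubit quantum channel Φ ∈ C(ℂ²), with √P = diag(√p, √(1−p)) and √Q = diag(√(1−p), √p), one has the identity ((σ_y⊗σ_y)(I⊗√P) D_Φ (I⊗√P)(σ_y⊗σ_y))* = (I⊗√Q) D_Φ (I⊗√Q), where σ_y is the Pauli-Y matrix, * denotes entrywise complex conjugation, and D_Φ is the Choi matrix of Φ. -/
open Matrix Kronecker
open scoped BigOperators ComplexOrder Classical

noncomputable section

/-- Matrix logarithm of a Hermitian matrix, taken on the support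
(`Real.log 0 = 0` implements the convention `log 0 = 0` on eigenvalues). -/
def matLog {n : Type*} [Fintype n] [DecidableEq n] (A : Matrix n n ℂ) : Matrix n n ℂ :=
  if hA : A.IsHermitian then
    (hA.eigenvectorUnitary : Matrix n n ℂ) *
      Matrix.diagonal (fun i => (Real.log (hA.eigenvalues i) : ℂ)) *
      star (hA.eigenvectorUnitary : Matrix n n ℂ)
  else 0

/-- von Neumann entropy `H(ρ) = -Tr (ρ log ρ)`. -/
def vonNeumann {n : Type*} [Fintype n] [DecidableEq n] (ρ : Matrix n n ℂ) : ℝ :=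
  -((ρ * matLog ρ).trace.re)

/-- A density matrix: positive semidefinite with unit trace. -/
def IsDensityMatrix {n : Type*} [Fintype n] [DecidableEq n] (ρ : Matrix n n ℂ) : Prop :=
  ρ.PosSemidef ∧ ρ.trace = 1

/-- Support (range) inclusion, `supp ρ ⊆ supp σ`. -/
def SuppLE {n : Type*} [Fintype n] [DecidableEq n] (ρ σ : Matrix n n ℂ) : Prop :=
  LinearMap.range ρ.mulVecLin ≤ LinearMap.range σ.mulVecLin

/-- Quantum relative entropy `D(ρ‖σ) = Tr ρ (log ρ - log σ)` when
`supp ρ ⊆ supp σ`, and `+∞` otherwise. -/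
def relEnt {n : Type*} [Fintype n] [DecidableEq n] (ρ σ : Matrix n n ℂ) : EReal :=
  if SuppLE ρ σ then (((ρ * (matLog ρ - matLog σ)).trace.re : ℝ) : EReal) else ⊤

/-- The extension `Φ ⊗ id` of a map on matrices, acting on bipartite matrices. -/
def extendId {a b k : ℕ} (Φ : Matrix (Fin a) (Fin a) ℂ →ₗ[ℂ] Matrix (Fin b) (Fin b) ℂ)
    (M : Matrix (Fin a × Fin k) (Fin a × Fin k) ℂ) :
    Matrix (Fin b × Fin k) (Fin b × Fin k) ℂ :=
  Matrix.of fun p q => Φ (Matrix.of fun r s => M (r, p.2) (s, q.2)) p.1 q.1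

/-- Complete positivity of a map on matrices. -/
def IsCompletelyPositive {a b : ℕ}
    (Φ : Matrix (Fin a) (Fin a) ℂ →ₗ[ℂ] Matrix (Fin b) (Fin b) ℂ) : Prop :=
  ∀ k : ℕ, ∀ M : Matrix (Fin a × Fin k) (Fin a × Fin k) ℂ,
    M.PosSemidef → (extendId Φ M).PosSemidef

/-- A quantum channel: a completely positive trace-preserving linear map. -/
structure QChannel (a b : ℕ) where
  map : Matrix (Fin a) (Fin a) ℂ →ₗ[ℂ] Matrix (Fin b) (Fin b) ℂ
  cp : IsCompletelyPositive map
  tp : ∀ M, (map M).trace = M.trace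

/-- The (unnormalized) maximally entangled projector `|φ⁺⟩⟨φ⁺|`, `|φ⁺⟩ = ∑ᵢ |ii⟩`. -/
def maxEnt (d : ℕ) : Matrix (Fin d × Fin d) (Fin d × Fin d) ℂ :=
  Matrix.of fun p q => if p.1 = p.2 ∧ q.1 = q.2 then 1 else 0

/-- The Choi matrix `D_Φ = (Φ ⊗ id)(|φ⁺⟩⟨φ⁺|)`. -/
def choiOf {a b : ℕ} (Φ : Matrix (Fin a) (Fin a) ℂ →ₗ[ℂ] Matrix (Fin b) (Fin b) ℂ) :
    Matrix (Fin b × Fin a) (Fin b × Fin a) ℂ :=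
  extendId Φ (maxEnt a)

/-- The Choi–Jamiołkowski state `J_Φ = D_Φ / d`. -/
def jamState {a b : ℕ} (Φ : Matrix (Fin a) (Fin a) ℂ →ₗ[ℂ] Matrix (Fin b) (Fin b) ℂ) :
    Matrix (Fin b × Fin a) (Fin b × Fin a) ℂ :=
  ((a : ℂ))⁻¹ • choiOf Φ

/-- The map entropy `H^K(Φ) = H(J_Φ)`. -/
def mapEntropy {a b : ℕ} (Φ : Matrix (Fin a) (Fin a) ℂ →ₗ[ℂ] Matrix (Fin b) (Fin b) ℂ) : ℝ :=
  vonNeumann (jamState Φ)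

/-- The completely depolarizing channel `R(ρ) = (Tr ρ) I / dim`. -/
def depolMap (a b : ℕ) : Matrix (Fin a) (Fin a) ℂ →ₗ[ℂ] Matrix (Fin b) (Fin b) ℂ where
  toFun M := M.trace • ((b : ℂ))⁻¹ • (1 : Matrix (Fin b) (Fin b) ℂ)
  map_add' M N := by simp [Matrix.trace_add, add_smul]
  map_smul' c M := by simp [Matrix.trace_smul, smul_smul, mul_assoc]

/-- A pure state (rank-one projector onto a unit vector). -/
def IsPureState {n : Type*} [Fintype n] (ψ : Matrix n n ℂ) : Prop :=
  ∃ v : n → ℂ, (∑ i, Complex.normSq (v i)) = 1 ∧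
    ψ = Matrix.of fun i j => v i * (starRingEnd ℂ) (v j)

/-- The channel relative entropy `D(Φ‖R)`: the supremum over bipartite pure
input states (on `X_A ⊗ X_R`, `X_R ≅ X_A`) of the relative entropy of the
output of the extended channel relative to the output of the extended
completely depolarizing channel. -/
def relEntChannel {a b : ℕ} (Φ : QChannel a b) : EReal :=
  ⨆ ψ : {ψ : Matrix (Fin a × Fin a) (Fin a × Fin a) ℂ // IsPureState ψ},
    relEnt (extendId Φ.map ψ.1) (extendId (depolMap a b) ψ.1)

/-- The Gour–Wilde entropy of a quantum channel, `H(Φ) = log dim X_B - D(Φ‖R)`. -/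
def gwEntropy {a b : ℕ} (Φ : QChannel a b) : EReal :=
  ((Real.log b : ℝ) : EReal) - relEntChannel Φ

/-- The vector `√p |00⟩ + √(1-p) |11⟩`. -/
def psiP (p : ℝ) : Fin 2 × Fin 2 → ℂ := fun x =>
  if x.1 = 0 ∧ x.2 = 0 then ((Real.sqrt p : ℝ) : ℂ)
  else if x.1 = 1 ∧ x.2 = 1 then ((Real.sqrt (1 - p) : ℝ) : ℂ) else 0

/-- The two-qubit pure state `φ_P = |ψ_P⟩⟨ψ_P|` with `|ψ_P⟩ = √p|00⟩ + √(1-p)|11⟩`. -/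
def phiP (p : ℝ) : Matrix (Fin 2 × Fin 2) (Fin 2 × Fin 2) ℂ :=
  Matrix.of fun x y => psiP p x * (starRingEnd ℂ) (psiP p y)

/-- `√P = diag(√p, √(1-p))`. -/
def sqrtP (p : ℝ) : Matrix (Fin 2) (Fin 2) ℂ :=
  Matrix.diagonal ![((Real.sqrt p : ℝ) : ℂ), ((Real.sqrt (1 - p) : ℝ) : ℂ)]

/-- The Pauli matrix `σ_y = [[0, -i], [i, 0]]`. -/
def pauliY : Matrix (Fin 2) (Fin 2) ℂ := !![0, -Complex.I; Complex.I, 0]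

/-- `√Q = diag(√(1-p), √p)`. -/
def sqrtQ (p : ℝ) : Matrix (Fin 2) (Fin 2) ℂ :=
  Matrix.diagonal ![((Real.sqrt (1 - p) : ℝ) : ℂ), ((Real.sqrt p : ℝ) : ℂ)]

lemma maxEnt_posSemidef (d : ℕ) : (maxEnt d).PosSemidef := by
  have : maxEnt d = (Matrix.of fun (p : Fin d × Fin d) (_ : Unit) =>
      (if p.1 = p.2 then (1:ℂ) else 0)) *
      (Matrix.of fun (p : Fin d × Fin d) (_ : Unit) =>
      (if p.1 = p.2 then (1:ℂ) else 0))ᴴ := by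
    ext p q
    simp only [Matrix.mul_apply, maxEnt, Matrix.of_apply, Matrix.conjTranspose_apply,
      Finset.univ_unique, Finset.sum_singleton]
    by_cases h1 : p.1 = p.2 <;> by_cases h2 : q.1 = q.2 <;> simp [h1, h2]
  rw [this]
  exact Matrix.posSemidef_self_mul_conjTranspose _

lemma choi_entry {a b : ℕ} (Φ : Matrix (Fin a) (Fin a) ℂ →ₗ[ℂ] Matrix (Fin b) (Fin b) ℂ)
    (i k : Fin b) (j l : Fin a) :
    choiOf Φ (i, j) (k, l) = Φ (Matrix.single j l 1) i k := by
  have h : (Matrix.of fun r s => maxEnt a (r, j) (s, l)) = Matrix.single j l 1 := by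
    ext r s
    simp [maxEnt, Matrix.single, eq_comm]
  show Φ (Matrix.of fun r s => maxEnt a (r, j) (s, l)) i k = _
  rw [h]

lemma diag_sandwich (d : Fin 2 × Fin 2 → ℂ) (M : Matrix (Fin 2 × Fin 2) (Fin 2 × Fin 2) ℂ) :
    Matrix.diagonal d * M * Matrix.diagonal d =
      Matrix.of fun x y => d x * M x y * d y := by
  ext x y
  simp [Matrix.mul_diagonal, Matrix.diagonal_mul]

lemma Y_sandwich (M : Matrix (Fin 2 × Fin 2) (Fin 2 × Fin 2) ℂ) :
    (pauliY ⊗ₖ pauliY) * M * (pauliY ⊗ₖ pauliY) =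
      Matrix.of fun x y => (if x.1 = x.2 then (-1:ℂ) else 1) * (if y.1 = y.2 then (-1:ℂ) else 1) *
        M (x.1 + 1, x.2 + 1) (y.1 + 1, y.2 + 1) := by
  ext ⟨i, j⟩ ⟨k, l⟩
  fin_cases i <;> fin_cases j <;> fin_cases k <;> fin_cases l <;>
    simp [Matrix.mul_apply, Fintype.sum_prod_type, Fin.sum_univ_two, pauliY,
      Matrix.kroneckerMap_apply]

lemma oneKron_diag (v : Fin 2 → ℂ) :
    (1 : Matrix (Fin 2) (Fin 2) ℂ) ⊗ₖ Matrix.diagonal v =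
      Matrix.diagonal (fun x : Fin 2 × Fin 2 => v x.2) := by
  ext ⟨i, j⟩ ⟨k, l⟩
  fin_cases i <;> fin_cases j <;> fin_cases k <;> fin_cases l <;>
    simp [Matrix.one_apply, Matrix.diagonal, Matrix.kroneckerMap_apply, Prod.ext_iff]

/-- For any unital qubit channel `Φ ∈ C(ℂ²)`, with `√P = diag(√p, √(1-p))`
and `√Q = diag(√(1-p), √p)`,
`((σ_y⊗σ_y)(I⊗√P) D_Φ (I⊗√P)(σ_y⊗σ_y))* = (I⊗√Q) D_Φ (I⊗√Q)`,
where `*` is entrywise complex conjugation. -/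
theorem conj_pauliY_sqrtP_choi (Φ : QChannel 2 2) (hU : Φ.map 1 = 1) (p : ℝ)
    (hp : p ∈ Set.Icc (0 : ℝ) 1) :
    ((pauliY ⊗ₖ pauliY) *
        (((1 : Matrix (Fin 2) (Fin 2) ℂ) ⊗ₖ sqrtP p) * choiOf Φ.map *
          ((1 : Matrix (Fin 2) (Fin 2) ℂ) ⊗ₖ sqrtP p)) *
        (pauliY ⊗ₖ pauliY)).map (starRingEnd ℂ) =
      ((1 : Matrix (Fin 2) (Fin 2) ℂ) ⊗ₖ sqrtQ p) * choiOf Φ.map *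
        ((1 : Matrix (Fin 2) (Fin 2) ℂ) ⊗ₖ sqrtQ p) := by
  set D := choiOf Φ.map with hD
  have hpsd : D.PosSemidef := Φ.cp 2 (maxEnt 2) (maxEnt_posSemidef 2)
  have hh : ∀ x y : Fin 2 × Fin 2, (starRingEnd ℂ) (D y x) = D x y :=
    fun x y => congrFun (congrFun hpsd.1 x) y
  have htp : ∀ j l : Fin 2, D (0, j) (0, l) + D (1, j) (1, l)
      = if j = l then 1 else 0 := by
    intro j l
    have h := Φ.tp (Matrix.single j l 1)
    rw [Matrix.trace_fin_two] at h
    simp only [hD, choi_entry]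
    rw [h]
    fin_cases j <;> fin_cases l <;>
      simp [Matrix.trace, Matrix.diag, Matrix.single, Fin.sum_univ_two] <;> decide
  have hun : ∀ i k : Fin 2, D (i, 0) (k, 0) + D (i, 1) (k, 1)
      = if i = k then 1 else 0 := by
    intro i k
    have hsum : (Matrix.single (0:Fin 2) (0:Fin 2) (1:ℂ))
        + Matrix.single (1:Fin 2) (1:Fin 2) (1:ℂ) = 1 := by
      ext r s; fin_cases r <;> fin_cases s <;> simp [Matrix.single, Matrix.one_apply]
    have h : Φ.map (Matrix.single (0:Fin 2) (0:Fin 2) (1:ℂ))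
        + Φ.map (Matrix.single (1:Fin 2) (1:Fin 2) (1:ℂ)) = 1 := by
      rw [← map_add, hsum, hU]
    have h2 := congrFun (congrFun h i) k
    simp only [hD, choi_entry]
    simpa [Matrix.add_apply, Matrix.one_apply] using h2
  have tp00 : D (0,0) (0,0) + D (1,0) (1,0) = 1 := by simpa using htp 0 0
  have tp01 : D (0,0) (0,1) + D (1,0) (1,1) = 0 := by simpa using htp 0 1
  have tp10 : D (0,1) (0,0) + D (1,1) (1,0) = 0 := by simpa using htp 1 0
  have tp11 : D (0,1) (0,1) + D (1,1) (1,1) = 1 := by simpa using htp 1 1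
  have un00 : D (0,0) (0,0) + D (0,1) (0,1) = 1 := by simpa using hun 0 0
  have un01 : D (0,0) (1,0) + D (0,1) (1,1) = 0 := by simpa using hun 0 1
  have un10 : D (1,0) (0,0) + D (1,1) (0,1) = 0 := by simpa using hun 1 0
  have hP : sqrtP p = Matrix.diagonal ![((Real.sqrt p : ℝ) : ℂ), ((Real.sqrt (1-p) : ℝ) : ℂ)] := rfl
  have hQ : sqrtQ p = Matrix.diagonal ![((Real.sqrt (1-p) : ℝ) : ℂ), ((Real.sqrt p : ℝ) : ℂ)] := rfl
  rw [hP, hQ, oneKron_diag, oneKron_diag, diag_sandwich, diag_sandwich, Y_sandwich]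
  have hsp : ∀ x : ℂ, True := fun _ => trivial
  ext ⟨i, j⟩ ⟨k, l⟩
  fin_cases i <;> fin_cases j <;> fin_cases k <;> fin_cases l <;>
    simp only [Matrix.map_apply, Matrix.of_apply, Fin.isValue, Matrix.cons_val_zero,
      Matrix.cons_val_one, Matrix.head_cons, _root_.map_mul, map_neg, _root_.map_one,
      Complex.conj_ofReal, Fin.zero_eta, Fin.mk_one,
      show ((0:Fin 2)+1) = 1 from rfl, show ((1:Fin 2)+1) = 0 from rfl,
      show ((0:Fin 2) = 0) = True from by simp, show ((1:Fin 2) = 1) = True from by simp,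
      show ((0:Fin 2) = 1) = False from by simp, show ((1:Fin 2) = 0) = False from by simp,
      if_true, if_false, ite_true, ite_false, one_mul, neg_mul, neg_neg, mul_neg, map_neg]
  · linear_combination ((Real.sqrt (1-p):ℂ)*(Real.sqrt (1-p):ℂ)) * hh (1,1) (1,1) + ((Real.sqrt (1-p):ℂ)*(Real.sqrt (1-p):ℂ)) * tp11 - ((Real.sqrt (1-p):ℂ)*(Real.sqrt (1-p):ℂ)) * un00
  · linear_combination -((Real.sqrt (1-p):ℂ)*(Real.sqrt p:ℂ)) * hh (1,0) (1,1) - ((Real.sqrt (1-p):ℂ)*(Real.sqrt p:ℂ)) * tp01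
  · linear_combination -((Real.sqrt (1-p):ℂ)*(Real.sqrt (1-p):ℂ)) * hh (0,1) (1,1) - ((Real.sqrt (1-p):ℂ)*(Real.sqrt (1-p):ℂ)) * un01
  · linear_combination ((Real.sqrt (1-p):ℂ)*(Real.sqrt p:ℂ)) * hh (0,0) (1,1)
  · linear_combination -((Real.sqrt p:ℂ)*(Real.sqrt (1-p):ℂ)) * hh (1,1) (1,0) - ((Real.sqrt p:ℂ)*(Real.sqrt (1-p):ℂ)) * tp10
  · linear_combination ((Real.sqrt p:ℂ)*(Real.sqrt p:ℂ)) * hh (1,0) (1,0) + ((Real.sqrt p:ℂ)*(Real.sqrt p:ℂ)) * tp00 - ((Real.sqrt p:ℂ)*(Real.sqrt p:ℂ)) * un00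
  · linear_combination ((Real.sqrt p:ℂ)*(Real.sqrt (1-p):ℂ)) * hh (0,1) (1,0)
  · linear_combination -((Real.sqrt p:ℂ)*(Real.sqrt p:ℂ)) * hh (0,0) (1,0) - ((Real.sqrt p:ℂ)*(Real.sqrt p:ℂ)) * un01
  · linear_combination -((Real.sqrt (1-p):ℂ)*(Real.sqrt (1-p):ℂ)) * hh (1,1) (0,1) - ((Real.sqrt (1-p):ℂ)*(Real.sqrt (1-p):ℂ)) * un10
  · linear_combination ((Real.sqrt (1-p):ℂ)*(Real.sqrt p:ℂ)) * hh (1,0) (0,1)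
  · linear_combination ((Real.sqrt (1-p):ℂ)*(Real.sqrt (1-p):ℂ)) * hh (0,1) (0,1) + ((Real.sqrt (1-p):ℂ)*(Real.sqrt (1-p):ℂ)) * un00 - ((Real.sqrt (1-p):ℂ)*(Real.sqrt (1-p):ℂ)) * tp00
  · linear_combination -((Real.sqrt (1-p):ℂ)*(Real.sqrt p:ℂ)) * hh (0,0) (0,1) - ((Real.sqrt (1-p):ℂ)*(Real.sqrt p:ℂ)) * tp01
  · linear_combination ((Real.sqrt p:ℂ)*(Real.sqrt (1-p):ℂ)) * hh (1,1) (0,0)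
  · linear_combination -((Real.sqrt p:ℂ)*(Real.sqrt p:ℂ)) * hh (1,0) (0,0) - ((Real.sqrt p:ℂ)*(Real.sqrt p:ℂ)) * un10
  · linear_combination -((Real.sqrt p:ℂ)*(Real.sqrt (1-p):ℂ)) * hh (0,1) (0,0) - ((Real.sqrt p:ℂ)*(Real.sqrt (1-p):ℂ)) * tp10
  · linear_combination ((Real.sqrt p:ℂ)*(Real.sqrt p:ℂ)) * hh (0,0) (0,0) + ((Real.sqrt p:ℂ)*(Real.sqrt p:ℂ)) * un00 - ((Real.sqrt p:ℂ)*(Real.sqrt p:ℂ)) * tp11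
end
end

section
/- For any unital qubit quantum channel Φ ∈ C(ℂ²) and any p ∈ [0,1], the von Neumann entropy of the channel output on the entangled input is symmetric in p: H((Φ⊗id)(φ_P)) = H((Φ⊗id)(φ_Q)), where φ_P corresponds to Schmidt coefficients (p, 1−p) and φ_Q to (1−p, p). -/
open Matrix Kronecker
open scoped BigOperators ComplexOrder Classical

noncomputable section

/-! ### Auxiliary lemmas -/

section Aux

open Polynomial

theorem my_det_fin_four {R : Type*} [CommRing R] (A : Matrix (Fin 4) (Fin 4) R) :
    det A =
      A 0 0 * (A 1 1 * A 2 2 * A 3 3 - A 1 1 * A 2 3 * A 3 2 - A 1 2 * A 2 1 * A 3 3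
        + A 1 2 * A 2 3 * A 3 1 + A 1 3 * A 2 1 * A 3 2 - A 1 3 * A 2 2 * A 3 1)
      - A 0 1 * (A 1 0 * A 2 2 * A 3 3 - A 1 0 * A 2 3 * A 3 2 - A 1 2 * A 2 0 * A 3 3
        + A 1 2 * A 2 3 * A 3 0 + A 1 3 * A 2 0 * A 3 2 - A 1 3 * A 2 2 * A 3 0)
      + A 0 2 * (A 1 0 * A 2 1 * A 3 3 - A 1 0 * A 2 3 * A 3 1 - A 1 1 * A 2 0 * A 3 3
        + A 1 1 * A 2 3 * A 3 0 + A 1 3 * A 2 0 * A 3 1 - A 1 3 * A 2 1 * A 3 0)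
      - A 0 3 * (A 1 0 * A 2 1 * A 3 2 - A 1 0 * A 2 2 * A 3 1 - A 1 1 * A 2 0 * A 3 2
        + A 1 1 * A 2 2 * A 3 0 + A 1 2 * A 2 0 * A 3 1 - A 1 2 * A 2 1 * A 3 0) := by
  rw [det_succ_row_zero]
  simp only [Fin.sum_univ_four, det_fin_three, submatrix_apply, Fin.succ_zero_eq_one,
    Fin.succ_one_eq_two, Fin.zero_succAbove, Fin.succ_succAbove_zero, Fin.succ_succAbove_one,
    Fin.val_zero, Fin.val_one, Fin.val_two, pow_zero, pow_one, one_mul, neg_mul, neg_neg,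
    show (Fin.succ 2 : Fin 4) = 3 from rfl,
    show ((1 : Fin 4).succAbove 0) = 0 from rfl,
    show ((1 : Fin 4).succAbove 1) = 2 from rfl,
    show ((1 : Fin 4).succAbove 2) = 3 from rfl,
    show ((2 : Fin 4).succAbove 0) = 0 from rfl,
    show ((2 : Fin 4).succAbove 1) = 1 from rfl,
    show ((2 : Fin 4).succAbove 2) = 3 from rfl,
    show ((3 : Fin 4).succAbove 0) = 0 from rfl,
    show ((3 : Fin 4).succAbove 1) = 1 from rfl,
    show ((3 : Fin 4).succAbove 2) = 2 from rfl,
    show (((3 : Fin 4) : ℕ)) = 3 from rfl]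
  ring

set_option maxHeartbeats 1000000 in
lemma core_det (d00 d01 d02 d03 d10 d11 d12 d13 d20 d21 d22 d23 d30 d31 d32 d33 z p : ℂ)
    (h1 : d00 + d22 = 1) (h2 : d01 + d23 = 0) (h3 : d10 + d32 = 0) (h4 : d11 + d33 = 1)
    (h5 : d00 + d11 = 1) (h6 : d02 + d13 = 0) (h7 : d20 + d31 = 0) :
    Matrix.det !![z - d00 * p, -(d01 * (1 - p)), -(d02 * p), -(d03 * (1 - p));
                  -(d10 * p), z - d11 * (1 - p), -(d12 * p), -(d13 * (1 - p));
                  -(d20 * p), -(d21 * (1 - p)), z - d22 * p, -(d23 * (1 - p));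
                  -(d30 * p), -(d31 * (1 - p)), -(d32 * p), z - d33 * (1 - p)] =
    Matrix.det !![z - d00 * (1 - p), -(d01 * p), -(d02 * (1 - p)), -(d03 * p);
                  -(d10 * (1 - p)), z - d11 * p, -(d12 * (1 - p)), -(d13 * p);
                  -(d20 * (1 - p)), -(d21 * p), z - d22 * (1 - p), -(d23 * p);
                  -(d30 * (1 - p)), -(d31 * p), -(d32 * (1 - p)), z - d33 * p] := by
  have e22 : d22 = 1 - d00 := by linear_combination h1
  have e23 : d23 = -d01 := by linear_combination h2
  have e32 : d32 = -d10 := by linear_combination h3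
  have e11 : d11 = 1 - d00 := by linear_combination h5
  have e33 : d33 = d00 := by linear_combination h4 - h5
  have e13 : d13 = -d02 := by linear_combination h6
  have e31 : d31 = -d20 := by linear_combination h7
  subst e22 e23 e32 e11 e33 e13 e31
  rw [my_det_fin_four, my_det_fin_four]
  simp only [Matrix.of_apply, Matrix.cons_val', Matrix.cons_val_zero, Matrix.cons_val_one, Matrix.cons_val_two, Matrix.cons_val_three, Matrix.head_cons, Matrix.tail_cons, Matrix.empty_val']
  norm_num [Matrix.cons_val_zero, Matrix.cons_val_one]
  ring

def e4 : Fin 4 ≃ Fin 2 × Fin 2 where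
  toFun := ![(0, 0), (0, 1), (1, 0), (1, 1)]
  invFun x := ![![0, 1], ![2, 3]] x.1 x.2
  left_inv := by decide
  right_inv := by decide

set_option maxHeartbeats 1000000 in
lemma key_det (D : Matrix (Fin 2 × Fin 2) (Fin 2 × Fin 2) ℂ)
    (h1 : ∀ i j : Fin 2, ∑ k, D (k, i) (k, j) = if i = j then (1 : ℂ) else 0)
    (h2 : ∀ k l : Fin 2, ∑ j, D (k, j) (l, j) = if k = l then (1 : ℂ) else 0)
    (w z : ℂ) :
    (z • (1 : Matrix (Fin 2 × Fin 2) (Fin 2 × Fin 2) ℂ) -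
        D * Matrix.diagonal (fun x : Fin 2 × Fin 2 => if x.2 = 0 then w else 1 - w)).det =
    (z • (1 : Matrix (Fin 2 × Fin 2) (Fin 2 × Fin 2) ℂ) -
        D * Matrix.diagonal (fun x : Fin 2 × Fin 2 => if x.2 = 0 then 1 - w else w)).det := by
  rw [← Matrix.det_submatrix_equiv_self e4
      (z • 1 - D * Matrix.diagonal (fun x : Fin 2 × Fin 2 => if x.2 = 0 then w else 1 - w)),
    ← Matrix.det_submatrix_equiv_self e4
      (z • 1 - D * Matrix.diagonal (fun x : Fin 2 × Fin 2 => if x.2 = 0 then 1 - w else w))]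
  have hA : (z • (1 : Matrix (Fin 2 × Fin 2) (Fin 2 × Fin 2) ℂ) -
      D * Matrix.diagonal (fun x : Fin 2 × Fin 2 => if x.2 = 0 then w else 1 - w)).submatrix e4 e4 =
      !![z - D (0,0) (0,0) * w, -(D (0,0) (0,1) * (1 - w)), -(D (0,0) (1,0) * w), -(D (0,0) (1,1) * (1 - w));
         -(D (0,1) (0,0) * w), z - D (0,1) (0,1) * (1 - w), -(D (0,1) (1,0) * w), -(D (0,1) (1,1) * (1 - w));
         -(D (1,0) (0,0) * w), -(D (1,0) (0,1) * (1 - w)), z - D (1,0) (1,0) * w, -(D (1,0) (1,1) * (1 - w));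
         -(D (1,1) (0,0) * w), -(D (1,1) (0,1) * (1 - w)), -(D (1,1) (1,0) * w), z - D (1,1) (1,1) * (1 - w)] := by
    ext i j
    fin_cases i <;> fin_cases j <;>
      ((simp [e4, Matrix.mul_diagonal, Matrix.one_apply]; try ring) <;>
        (intro h; exact absurd h (by decide)))
  have hB : (z • (1 : Matrix (Fin 2 × Fin 2) (Fin 2 × Fin 2) ℂ) -
      D * Matrix.diagonal (fun x : Fin 2 × Fin 2 => if x.2 = 0 then 1 - w else w)).submatrix e4 e4 =
      !![z - D (0,0) (0,0) * (1 - w), -(D (0,0) (0,1) * w), -(D (0,0) (1,0) * (1 - w)), -(D (0,0) (1,1) * w);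
         -(D (0,1) (0,0) * (1 - w)), z - D (0,1) (0,1) * w, -(D (0,1) (1,0) * (1 - w)), -(D (0,1) (1,1) * w);
         -(D (1,0) (0,0) * (1 - w)), -(D (1,0) (0,1) * w), z - D (1,0) (1,0) * (1 - w), -(D (1,0) (1,1) * w);
         -(D (1,1) (0,0) * (1 - w)), -(D (1,1) (0,1) * w), -(D (1,1) (1,0) * (1 - w)), z - D (1,1) (1,1) * w] := by
    ext i j
    fin_cases i <;> fin_cases j <;>
      ((simp [e4, Matrix.mul_diagonal, Matrix.one_apply]; try ring) <;>
        (intro h; exact absurd h (by decide)))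
  rw [hA, hB]
  have e1 := h1 0 0; have e2 := h1 0 1; have e3 := h1 1 0; have e4' := h1 1 1
  have e5 := h2 0 0; have e6 := h2 0 1; have e7 := h2 1 0
  simp only [Fin.sum_univ_two, if_true, if_pos rfl] at e1 e2 e3 e4' e5 e6 e7
  norm_num at e1 e2 e3 e4' e5 e6 e7
  exact core_det _ _ _ _ _ _ _ _ _ _ _ _ _ _ _ _ z w e1 e2 e3 e4' e5 e6 e7

variable {n : Type*} [Fintype n] [DecidableEq n]

lemma conj_mul_conj (V : Matrix n n ℂ) (hV' : star V * V = 1) (d1 d2 : n → ℂ) :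
    (V * Matrix.diagonal d1 * star V) * (V * Matrix.diagonal d2 * star V) =
      V * Matrix.diagonal (fun i => d1 i * d2 i) * star V := by
  simp only [Matrix.mul_assoc]
  rw [← Matrix.mul_assoc (star V) V, hV', Matrix.one_mul,
    ← Matrix.mul_assoc (Matrix.diagonal d1) (Matrix.diagonal d2), Matrix.diagonal_mul_diagonal]

lemma vonNeumann_eq_sum (ρ : Matrix n n ℂ) (h : ρ.IsHermitian) :
    vonNeumann ρ = -∑ i, h.eigenvalues i * Real.log (h.eigenvalues i) := by
  have hV' : star (h.eigenvectorUnitary : Matrix n n ℂ) * (h.eigenvectorUnitary : Matrix n n ℂ) = 1 :=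
    (Matrix.mem_unitaryGroup_iff').mp h.eigenvectorUnitary.2
  rw [vonNeumann, matLog, dif_pos h]
  have e := congrArg (fun M : Matrix n n ℂ => M *
      ((h.eigenvectorUnitary : Matrix n n ℂ) *
        Matrix.diagonal (fun i => (Real.log (h.eigenvalues i) : ℂ)) *
        star (h.eigenvectorUnitary : Matrix n n ℂ))) (show ρ = (h.eigenvectorUnitary : Matrix n n ℂ) *
        Matrix.diagonal (RCLike.ofReal ∘ h.eigenvalues) * star (h.eigenvectorUnitary : Matrix n n ℂ) from
        h.spectral_theorem)
  rw [conj_mul_conj _ hV'] at e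
  rw [e, Matrix.trace_mul_cycle, hV', Matrix.one_mul, Matrix.trace_diagonal]
  rw [Complex.re_sum]
  simp [Function.comp]

lemma det_smul_one_sub_eq_prod (ρ : Matrix n n ℂ) (h : ρ.IsHermitian) (z : ℂ) :
    (z • (1 : Matrix n n ℂ) - ρ).det = ∏ i, (z - ((h.eigenvalues i : ℝ) : ℂ)) := by
  have hV : (h.eigenvectorUnitary : Matrix n n ℂ) * star (h.eigenvectorUnitary : Matrix n n ℂ) = 1 :=
    (Matrix.mem_unitaryGroup_iff).mp h.eigenvectorUnitary.2
  set V : Matrix n n ℂ := (h.eigenvectorUnitary : Matrix n n ℂ) with hVdef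
  have key : z • (1 : Matrix n n ℂ) - ρ =
      V * Matrix.diagonal (fun i => z - ((h.eigenvalues i : ℝ) : ℂ)) * star V := by
    have h1 : V * (z • (1 : Matrix n n ℂ)) * star V = z • (1 : Matrix n n ℂ) := by
      rw [Matrix.mul_smul, Matrix.mul_one, Matrix.smul_mul, hV]
    have hd : z • (1 : Matrix n n ℂ) - Matrix.diagonal (RCLike.ofReal ∘ h.eigenvalues) =
        Matrix.diagonal (fun i => z - ((h.eigenvalues i : ℝ) : ℂ)) := by
      ext i j
      by_cases hij : i = j <;>
        simp [hij, Matrix.one_apply, Matrix.diagonal_apply, Function.comp]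
    conv_lhs => rw [← h1]
    conv_lhs => rw [show ρ = V * Matrix.diagonal (RCLike.ofReal ∘ h.eigenvalues) * star V from
      h.spectral_theorem]
    rw [← Matrix.sub_mul, ← Matrix.mul_sub, hd]
  rw [key, Matrix.det_mul, Matrix.det_mul, mul_comm (V.det), mul_assoc, ← Matrix.det_mul, hV,
    Matrix.det_one, mul_one, Matrix.det_diagonal]

lemma multiset_eq_of_prod_eq (lam mu : n → ℝ)
    (h : ∀ z : ℂ, ∏ i, (z - ((lam i : ℝ) : ℂ)) = ∏ i, (z - ((mu i : ℝ) : ℂ))) :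
    Finset.univ.val.map lam = Finset.univ.val.map mu := by
  have hpoly : (∏ i, (X - C ((lam i : ℝ) : ℂ))) = ∏ i, (X - C ((mu i : ℝ) : ℂ)) := by
    apply Polynomial.funext
    intro z
    simpa [eval_prod] using h z
  have hroots : (Finset.univ.val.map fun i => ((lam i : ℝ) : ℂ)) =
      (Finset.univ.val.map fun i => ((mu i : ℝ) : ℂ)) := by
    have h1 : ((Finset.univ.val.map fun i => ((lam i : ℝ) : ℂ)).map fun a => X - C a).prod =
        ∏ i, (X - C ((lam i : ℝ) : ℂ)) := by
      rw [Multiset.map_map]; rfl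
    have h2 : ((Finset.univ.val.map fun i => ((mu i : ℝ) : ℂ)).map fun a => X - C a).prod =
        ∏ i, (X - C ((mu i : ℝ) : ℂ)) := by
      rw [Multiset.map_map]; rfl
    rw [← roots_multiset_prod_X_sub_C (Finset.univ.val.map fun i => ((lam i : ℝ) : ℂ)),
      ← roots_multiset_prod_X_sub_C (Finset.univ.val.map fun i => ((mu i : ℝ) : ℂ)), h1, h2, hpoly]
  have := congrArg (Multiset.map Complex.re) hroots
  simpa [Multiset.map_map, Function.comp] using this

lemma sum_f_eq_of_multiset_eq (lam mu : n → ℝ) (f : ℝ → ℝ)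
    (h : Finset.univ.val.map lam = Finset.univ.val.map mu) :
    ∑ i, f (lam i) = ∑ i, f (mu i) := by
  have h1 : ∑ i, f (lam i) = ((Finset.univ.val.map lam).map f).sum := by
    rw [Multiset.map_map]; rfl
  have h2 : ∑ i, f (mu i) = ((Finset.univ.val.map mu).map f).sum := by
    rw [Multiset.map_map]; rfl
  rw [h1, h2, h]

lemma det_smul_one_sub_mul_comm (A B : Matrix n n ℂ) (z : ℂ) :
    (z • (1 : Matrix n n ℂ) - A * B).det = (z • (1 : Matrix n n ℂ) - B * A).det := by
  rcases eq_or_ne z 0 with rfl | hz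
  · simp only [zero_smul, zero_sub, Matrix.det_neg, Matrix.det_mul]
    ring
  · have h1 : z • (1 : Matrix n n ℂ) - A * B = z • ((1 : Matrix n n ℂ) - (z⁻¹ • A) * B) := by
      rw [smul_sub, Matrix.smul_mul, smul_smul, mul_inv_cancel₀ hz, one_smul]
    have h2 : z • (1 : Matrix n n ℂ) - B * A = z • ((1 : Matrix n n ℂ) - B * (z⁻¹ • A)) := by
      rw [smul_sub, Matrix.mul_smul, smul_smul, mul_inv_cancel₀ hz, one_smul]
    rw [h1, h2, Matrix.det_smul, Matrix.det_smul, Matrix.det_one_sub_mul_comm]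

lemma outer_posSemidef {m : Type*} [Fintype m] (v : m → ℂ) :
    (Matrix.of fun i j => v i * (starRingEnd ℂ) (v j)).PosSemidef := by
  have h := Matrix.posSemidef_self_mul_conjTranspose
    (Matrix.of (fun i (_ : Fin 1) => v i) : Matrix m (Fin 1) ℂ)
  have e : (Matrix.of fun i j => v i * (starRingEnd ℂ) (v j)) =
      (Matrix.of (fun i (_ : Fin 1) => v i) : Matrix m (Fin 1) ℂ) *
        (Matrix.of (fun i (_ : Fin 1) => v i) : Matrix m (Fin 1) ℂ)ᴴ := by
    ext i j
    simp [Matrix.mul_apply, Matrix.conjTranspose_apply]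
  rw [e]; exact h

lemma maxEnt_two_posSemidef : (maxEnt 2).PosSemidef := by
  have e : maxEnt 2 = Matrix.of fun x y =>
      (fun x : Fin 2 × Fin 2 => if x.1 = x.2 then (1 : ℂ) else 0) x *
        (starRingEnd ℂ) ((fun x : Fin 2 × Fin 2 => if x.1 = x.2 then (1 : ℂ) else 0) y) := by
    ext x y
    by_cases h1 : x.1 = x.2 <;> by_cases h2 : y.1 = y.2 <;> simp [maxEnt, h1, h2]
  rw [e]; exact outer_posSemidef _

lemma extendId_diag_conj {a b k : ℕ}
    (Φ : Matrix (Fin a) (Fin a) ℂ →ₗ[ℂ] Matrix (Fin b) (Fin b) ℂ)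
    (M : Matrix (Fin a × Fin k) (Fin a × Fin k) ℂ) (e : Fin k → ℂ) :
    extendId Φ (Matrix.diagonal (fun x : Fin a × Fin k => e x.2) * M *
        Matrix.diagonal (fun x : Fin a × Fin k => e x.2)) =
      Matrix.diagonal (fun x : Fin b × Fin k => e x.2) * extendId Φ M *
        Matrix.diagonal (fun x : Fin b × Fin k => e x.2) := by
  ext x y
  show Φ (Matrix.of fun r s =>
      (Matrix.diagonal (fun x : Fin a × Fin k => e x.2) * M *
        Matrix.diagonal (fun x : Fin a × Fin k => e x.2)) (r, x.2) (s, y.2)) x.1 y.1 = _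
  have harg : (Matrix.of fun r s =>
      (Matrix.diagonal (fun x : Fin a × Fin k => e x.2) * M *
        Matrix.diagonal (fun x : Fin a × Fin k => e x.2)) (r, x.2) (s, y.2)) =
      (e x.2 * e y.2) • (Matrix.of fun r s => M (r, x.2) (s, y.2)) := by
    ext r s
    simp only [Matrix.diagonal_mul, Matrix.mul_diagonal, Matrix.of_apply, Matrix.smul_apply,
      smul_eq_mul]
    ring
  rw [harg, _root_.map_smul]
  simp only [Matrix.smul_apply, smul_eq_mul, extendId, Matrix.diagonal_mul,
    Matrix.mul_diagonal, Matrix.of_apply]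
  ring

def cP (p : ℝ) : Fin 2 → ℂ := fun i =>
  if i = 0 then ((Real.sqrt p : ℝ) : ℂ) else ((Real.sqrt (1 - p) : ℝ) : ℂ)

lemma phiP_eq_diag (p : ℝ) : phiP p =
    Matrix.diagonal (fun x : Fin 2 × Fin 2 => cP p x.2) * maxEnt 2 *
      Matrix.diagonal (fun x : Fin 2 × Fin 2 => cP p x.2) := by
  ext x y
  obtain ⟨i, j⟩ := x
  obtain ⟨k, l⟩ := y
  fin_cases i <;> fin_cases j <;> fin_cases k <;> fin_cases l <;>
    simp [phiP, psiP, maxEnt, cP, Matrix.diagonal_mul, Matrix.mul_diagonal]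

end Aux

/-- For any unital qubit quantum channel `Φ ∈ C(ℂ²)` and `p ∈ [0,1]`,
the output entropy is symmetric in `p`: `H((Φ⊗id)(φ_P)) = H((Φ⊗id)(φ_Q))`, where
`φ_Q` has Schmidt coefficients `(1-p, p)`, i.e. `φ_Q = φ_{P}` at parameter `1-p`. -/
theorem vonNeumann_extend_phiP_symm (Φ : QChannel 2 2) (hU : Φ.map 1 = 1) (p : ℝ)
    (hp : p ∈ Set.Icc (0 : ℝ) 1) :
    vonNeumann (extendId Φ.map (phiP p)) = vonNeumann (extendId Φ.map (phiP (1 - p))) := by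
  obtain ⟨hp0, hp1⟩ := hp
  have hq0 : (0 : ℝ) ≤ 1 - p := by linarith
  have hPSDp : (extendId Φ.map (phiP p)).PosSemidef :=
    Φ.cp 2 (phiP p) (outer_posSemidef (psiP p))
  have hPSDq : (extendId Φ.map (phiP (1 - p))).PosSemidef :=
    Φ.cp 2 (phiP (1 - p)) (outer_posSemidef (psiP (1 - p)))
  set D : Matrix (Fin 2 × Fin 2) (Fin 2 × Fin 2) ℂ := extendId Φ.map (maxEnt 2) with hDdef
  have hDentry : ∀ k i l j : Fin 2,
      D (k, i) (l, j) = Φ.map (Matrix.of fun r s => if r = i ∧ s = j then (1 : ℂ) else 0) k l :=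
    fun k i l j => rfl
  have h1 : ∀ i j : Fin 2, ∑ k, D (k, i) (k, j) = if i = j then (1 : ℂ) else 0 := by
    intro i j
    have ht : ∑ k, D (k, i) (k, j) =
        (Φ.map (Matrix.of fun r s => if r = i ∧ s = j then (1 : ℂ) else 0)).trace := by
      simp [Matrix.trace, Matrix.diag, hDentry]
    rw [ht, Φ.tp]
    fin_cases i <;> fin_cases j <;>
      (simp [Matrix.trace, Matrix.diag, Fin.sum_univ_two]; try decide)
  have h2 : ∀ k l : Fin 2, ∑ j, D (k, j) (l, j) = if k = l then (1 : ℂ) else 0 := by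
    intro k l
    have hsum : (∑ j : Fin 2, (Matrix.of fun r s => if r = j ∧ s = j then (1 : ℂ) else 0 :
        Matrix (Fin 2) (Fin 2) ℂ)) = (1 : Matrix (Fin 2) (Fin 2) ℂ) := by
      ext r s
      fin_cases r <;> fin_cases s <;> simp [Fin.sum_univ_two, Matrix.one_apply]
    calc ∑ j, D (k, j) (l, j)
        = ∑ j : Fin 2, Φ.map (Matrix.of fun r s => if r = j ∧ s = j then (1 : ℂ) else 0) k l := by
          simp [hDentry]
      _ = (Φ.map (∑ j : Fin 2, (Matrix.of fun r s => if r = j ∧ s = j then (1 : ℂ) else 0 :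
            Matrix (Fin 2) (Fin 2) ℂ))) k l := by
          rw [map_sum]
          simp [Matrix.sum_apply]
      _ = (1 : Matrix (Fin 2) (Fin 2) ℂ) k l := by rw [hsum, hU]
      _ = if k = l then (1 : ℂ) else 0 := Matrix.one_apply
  have hsq1 : Matrix.diagonal (fun x : Fin 2 × Fin 2 => cP p x.2) *
      Matrix.diagonal (fun x : Fin 2 × Fin 2 => cP p x.2) =
      Matrix.diagonal (fun x : Fin 2 × Fin 2 => if x.2 = 0 then ((p : ℂ)) else 1 - (p : ℂ)) := by
    rw [Matrix.diagonal_mul_diagonal]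
    refine congrArg Matrix.diagonal ?_
    funext x
    by_cases h : x.2 = 0 <;>
      simp [Pi.mul_apply, cP, h, ← Complex.ofReal_mul, Real.mul_self_sqrt hp0, Real.mul_self_sqrt hq0]
  have hsq2 : Matrix.diagonal (fun x : Fin 2 × Fin 2 => cP (1 - p) x.2) *
      Matrix.diagonal (fun x : Fin 2 × Fin 2 => cP (1 - p) x.2) =
      Matrix.diagonal (fun x : Fin 2 × Fin 2 => if x.2 = 0 then (1 - (p : ℂ)) else (p : ℂ)) := by
    rw [Matrix.diagonal_mul_diagonal]
    refine congrArg Matrix.diagonal ?_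
    funext x
    by_cases h : x.2 = 0 <;>
      simp [Pi.mul_apply, cP, h, ← Complex.ofReal_mul, Real.mul_self_sqrt hq0,
        sub_sub_cancel, Real.mul_self_sqrt hp0]
  have hkey : ∀ z : ℂ, (z • 1 - extendId Φ.map (phiP p)).det =
      (z • 1 - extendId Φ.map (phiP (1 - p))).det := by
    intro z
    have hrw1 : extendId Φ.map (phiP p) =
        Matrix.diagonal (fun x : Fin 2 × Fin 2 => cP p x.2) * D *
          Matrix.diagonal (fun x : Fin 2 × Fin 2 => cP p x.2) := by
      rw [phiP_eq_diag, extendId_diag_conj]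
    have hrw2 : extendId Φ.map (phiP (1 - p)) =
        Matrix.diagonal (fun x : Fin 2 × Fin 2 => cP (1 - p) x.2) * D *
          Matrix.diagonal (fun x : Fin 2 × Fin 2 => cP (1 - p) x.2) := by
      rw [phiP_eq_diag, extendId_diag_conj]
    conv_lhs => rw [hrw1, Matrix.mul_assoc, det_smul_one_sub_mul_comm, Matrix.mul_assoc D, hsq1]
    conv_rhs => rw [hrw2, Matrix.mul_assoc, det_smul_one_sub_mul_comm, Matrix.mul_assoc D, hsq2]
    exact key_det D h1 h2 (p : ℂ) z
  rw [vonNeumann_eq_sum _ hPSDp.1, vonNeumann_eq_sum _ hPSDq.1]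
  refine congrArg Neg.neg ?_
  refine sum_f_eq_of_multiset_eq _ _ (fun x => x * Real.log x) ?_
  refine multiset_eq_of_prod_eq _ _ (fun z => ?_)
  rw [← det_smul_one_sub_eq_prod _ hPSDp.1 z, ← det_smul_one_sub_eq_prod _ hPSDq.1 z]
  exact hkey z
end
end
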